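/- The discrete interval hypergraph I(n), whose vertices are the points 1, 2, ..., n on a line and whose hyperedges are all sets of consecutive integers {a, a+1, ..., b} with 1 ≤ a ≤ b ≤ n, has conflict-free chromatic number exactly ⌊log₂ n⌋ + 1. -/

import Mathlib

private lemma between_val {x y : ℕ} (hx : 1 ≤ x) (hxy : x < y)
    (h : (Nat.factorization x) 2 = (Nat.factorization y) 2) :
    ∃ z, x < z ∧ z ≤ y ∧ (Nat.factorization x) 2 < (Nat.factorization z) 2 := by
  set v := (Nat.factorization x) 2 with hv
  have hxne : x ≠ 0 := by omega
  have hyne : y ≠ 0 := by omega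
  have h2 : Nat.Prime 2 := Nat.prime_two
  have hdx : (2:ℕ)^v ∣ x := Nat.ordProj_dvd x 2
  have hdy : (2:ℕ)^v ∣ y := by rw [h]; exact Nat.ordProj_dvd y 2
  set ox := x / 2^v with hox
  set oy := y / 2^v with hoy
  have hxo : 2^v * ox = x := Nat.mul_div_cancel' hdx
  have hyo : 2^v * oy = y := Nat.mul_div_cancel' hdy
  have hoxodd : ¬ (2 ∣ ox) := Nat.not_dvd_ordCompl h2 hxne
  have hlt : ox < oy := Nat.div_lt_div_of_lt_of_dvd hdy hxy
  refine ⟨2^v * (ox + 1), ?_, ?_, ?_⟩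
  · calc x = 2^v * ox := hxo.symm
    _ < 2^v * (ox + 1) := by
        have h0 : 0 < (2:ℕ)^v := Nat.pow_pos (n := v) (by norm_num)
        exact Nat.mul_lt_mul_of_pos_left (by omega) h0
  · calc 2^v * (ox+1) ≤ 2^v * oy := Nat.mul_le_mul_left _ (by omega)
    _ = y := hyo
  · have h2d : (2:ℕ) ∣ ox + 1 := by
      rcases Nat.even_or_odd ox with he | ho
      · exact absurd he.two_dvd hoxodd
      · exact (Nat.even_add_one.mpr (Nat.not_even_iff_odd.mpr ho)).two_dvd
    have hzd : (2:ℕ)^(v+1) ∣ 2^v * (ox+1) := by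
      rw [pow_succ]
      exact mul_dvd_mul dvd_rfl h2d
    have hzne : 2^v * (ox+1) ≠ 0 := by positivity
    have := (Nat.Prime.pow_dvd_iff_le_factorization h2 hzne).mp hzd
    omega

private lemma upper_cf (a b : ℕ) (ha : 1 ≤ a) (hab : a ≤ b) :
    ∃ x ∈ Finset.Icc a b, ∀ y ∈ Finset.Icc a b,
      (Nat.factorization y) 2 = (Nat.factorization x) 2 → y = x := by
  obtain ⟨x, hx, hmax⟩ := Finset.exists_max_image (Finset.Icc a b)
    (fun i => (Nat.factorization i) 2) ⟨a, Finset.mem_Icc.mpr ⟨le_rfl, hab⟩⟩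
  refine ⟨x, hx, fun y hy hcy => ?_⟩
  by_contra hne
  simp only [Finset.mem_Icc] at hx hy
  rcases lt_or_gt_of_ne hne with hlt | hlt
  · -- y < x
    obtain ⟨z, hz1, hz2, hz3⟩ := between_val (by omega) hlt hcy
    have := hmax z (Finset.mem_Icc.mpr ⟨by omega, by omega⟩)
    omega
  · -- x < y
    obtain ⟨z, hz1, hz2, hz3⟩ := between_val (by omega) hlt hcy.symm
    have := hmax z (Finset.mem_Icc.mpr ⟨by omega, by omega⟩)
    omega

private lemma lower_key (c : ℕ → ℕ) (n : ℕ)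
    (CF : ∀ a b : ℕ, 1 ≤ a → a ≤ b → b ≤ n →
        ∃ x ∈ Finset.Icc a b, ∀ y ∈ Finset.Icc a b, c y = c x → y = x) :
    ∀ m a b, b + 1 - a ≤ m → 1 ≤ a → b ≤ n →
      b + 1 - a ≤ 2 ^ ((Finset.Icc a b).image c).card - 1 := by
  intro m
  induction m with
  | zero => intro a b hm ha hb; omega
  | succ m ih =>
    intro a b hm ha hb
    by_cases hab : b < a
    · have : b + 1 - a = 0 := by omega
      omega
    push_neg at hab
    obtain ⟨x, hx, huniq⟩ := CF a b ha hab hb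
    simp only [Finset.mem_Icc] at hx
    set k := ((Finset.Icc a b).image c).card with hk
    have hcx : c x ∈ (Finset.Icc a b).image c :=
      Finset.mem_image_of_mem c (Finset.mem_Icc.mpr hx)
    have hk1 : 1 ≤ k := Finset.card_pos.mpr ⟨c x, hcx⟩
    -- side bound helper
    have side : ∀ a' b', a ≤ a' → b' ≤ b → ¬ (a' ≤ x ∧ x ≤ b') →
        ((Finset.Icc a' b').image c).card ≤ k - 1 := by
      intro a' b' ha' hb' hxnot
      have hsub : (Finset.Icc a' b').image c ⊆ ((Finset.Icc a b).image c).erase (c x) := by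
        intro col hcol
        obtain ⟨y, hy, hcy⟩ := Finset.mem_image.mp hcol
        simp only [Finset.mem_Icc] at hy
        have hyab : y ∈ Finset.Icc a b := Finset.mem_Icc.mpr ⟨by omega, by omega⟩
        refine Finset.mem_erase.mpr ⟨?_, Finset.mem_image.mpr ⟨y, hyab, hcy⟩⟩
        intro hcol_eq
        have := huniq y hyab (hcy.trans hcol_eq)
        omega
      calc ((Finset.Icc a' b').image c).card
          ≤ (((Finset.Icc a b).image c).erase (c x)).card := Finset.card_le_card hsub
        _ = k - 1 := by rw [Finset.card_erase_of_mem hcx]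
    -- left side
    have hL : x - a ≤ 2 ^ (k - 1) - 1 := by
      have hcard := side a (x - 1) le_rfl (by omega) (by omega)
      have := ih a (x - 1) (by omega) ha (by omega)
      have hpow : (2:ℕ) ^ ((Finset.Icc a (x-1)).image c).card ≤ 2 ^ (k - 1) :=
        Nat.pow_le_pow_right (by norm_num) hcard
      omega
    have hR : b - x ≤ 2 ^ (k - 1) - 1 := by
      have hcard := side (x + 1) b (by omega) le_rfl (by omega)
      have := ih (x + 1) b (by omega) (by omega) hb
      have hpow : (2:ℕ) ^ ((Finset.Icc (x+1) b).image c).card ≤ 2 ^ (k - 1) :=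
        Nat.pow_le_pow_right (by norm_num) hcard
      omega
    have h2k : (2:ℕ) ^ k = 2 * 2 ^ (k - 1) := by
      conv_lhs => rw [show k = (k - 1) + 1 by omega]
      ring
    have hpos : (1:ℕ) ≤ 2 ^ (k - 1) := Nat.one_le_two_pow
    omega

theorem stmt4 (n : ℕ) (hn : 1 ≤ n) :
    IsLeast {t : ℕ | ∃ c : ℕ → ℕ, (∀ i ∈ Finset.Icc 1 n, c i < t) ∧
      ∀ a b : ℕ, 1 ≤ a → a ≤ b → b ≤ n →
        ∃ x ∈ Finset.Icc a b, ∀ y ∈ Finset.Icc a b, c y = c x → y = x}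
      (Nat.log 2 n + 1) := by
  constructor
  · -- membership: color by 2-adic valuation
    refine ⟨fun i => (Nat.factorization i) 2, ?_, ?_⟩
    · intro i hi
      simp only [Finset.mem_Icc] at hi
      have hne : i ≠ 0 := by omega
      have h1 : (2:ℕ) ^ ((Nat.factorization i) 2) ≤ i := Nat.ordProj_le 2 hne
      have h2 : n < 2 ^ (Nat.log 2 n + 1) := Nat.lt_pow_succ_log_self (by norm_num) n
      have : (2:ℕ) ^ ((Nat.factorization i) 2) < 2 ^ (Nat.log 2 n + 1) := by omega
      exact (Nat.pow_lt_pow_iff_right (by norm_num)).mp this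
    · intro a b ha hab hb
      exact upper_cf a b ha hab
  · -- lower bound
    rintro t ⟨c, hlt, CF⟩
    have hK : ((Finset.Icc 1 n).image c).card ≤ t := by
      have hsub : (Finset.Icc 1 n).image c ⊆ Finset.range t := by
        intro col hcol
        obtain ⟨y, hy, hcy⟩ := Finset.mem_image.mp hcol
        exact Finset.mem_range.mpr (hcy ▸ hlt y hy)
      simpa using Finset.card_le_card hsub
    have := lower_key c n CF (n + 1 - 1) 1 n le_rfl le_rfl le_rfl
    have hpow : (2:ℕ) ^ ((Finset.Icc 1 n).image c).card ≤ 2 ^ t :=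
      Nat.pow_le_pow_right (by norm_num) hK
    have hlt2 : n < 2 ^ t := by omega
    have := (Nat.log_lt_iff_lt_pow (by norm_num) (by omega)).mpr hlt2
    omega
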